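/- Invariant functions of a Markov kernel with transition laws equivalent to the stationary measure are constant (the mechanism of Lemma 3.3 (1) and Theorem 3.5 (2), based on the everywhere-positive transition density of Lemma 3.2 (2)): Let (X, 𝓑) be a measurable space, μ a probability measure on X, and κ a Markov kernel on X such that μ is invariant under κ (i.e., μ.bind κ = μ, equivalently ∫_X κ(x, A) μ(dx) = μ(A) for all A ∈ 𝓑) and such that for μ-a.e. x the probability measure κ(x, ·) and μ are mutually absolutely continuous. If f : X → ℝ is bounded measurable and satisfies ∫_X f(y) κ(x, dy) = f(x) for μ-a.e. x, then there is a constant a ∈ ℝ such that f = a μ-a.e. -/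

import Mathlib

open MeasureTheory ProbabilityTheory

/-- Invariant functions of a Markov kernel whose transition laws are (a.e.) mutually
absolutely continuous with the stationary measure are a.e. constant. -/
theorem invariant_function_of_equivalent_kernel_constant
    {X : Type*} [MeasurableSpace X] (μ : Measure X) [IsProbabilityMeasure μ]
    (κ : Kernel X X) [IsMarkovKernel κ]
    (hinv : μ.bind (fun x => κ x) = μ)
    (hequiv : ∀ᵐ x ∂μ, κ x ≪ μ ∧ μ ≪ κ x)
    (f : X → ℝ) (hf : Measurable f) (C : ℝ) (hbd : ∀ x, |f x| ≤ C)
    (hharm : ∀ᵐ x ∂μ, ∫ y, f y ∂(κ x) = f x) :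
    ∃ a : ℝ, ∀ᵐ x ∂μ, f x = a := by
  classical
  -- integrability of bounded measurable functions w.r.t. probability measures
  have int_bd : ∀ (ν : Measure X) [IsProbabilityMeasure ν] (h : X → ℝ)
      (hm : Measurable h) (D : ℝ) (hb : ∀ x, |h x| ≤ D), Integrable h ν := by
    intro ν _ h hm D hb
    exact ⟨hm.aestronglyMeasurable,
      HasFiniteIntegral.of_bounded (C := D) (ae_of_all _ fun x => by
        simpa [Real.norm_eq_abs] using hb x)⟩
  have hf2m : Measurable fun y => f y ^ 2 := hf.pow_const 2
  have hf2bd : ∀ x, |f x ^ 2| ≤ C ^ 2 := by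
    intro x
    rw [abs_of_nonneg (sq_nonneg _)]
    calc f x ^ 2 = |f x| ^ 2 := (sq_abs _).symm
    _ ≤ C ^ 2 := pow_le_pow_left₀ (abs_nonneg _) (hbd x) 2
  -- the bind measure as a pushforward of the composition product
  have hmap : μ.bind (fun x => κ x) = (μ ⊗ₘ κ).map Prod.snd := by
    ext s hs
    rw [Measure.bind_apply hs κ.measurable.aemeasurable, Measure.map_apply measurable_snd hs,
      Measure.compProd_apply (measurable_snd hs)]
    rfl
  -- key identity from invariance
  have key : ∫ y, f y ^ 2 ∂μ = ∫ x, ∫ y, f y ^ 2 ∂(κ x) ∂μ := by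
    conv_lhs => rw [← hinv, hmap]
    rw [integral_map measurable_snd.aemeasurable hf2m.aestronglyMeasurable]
    rw [Measure.integral_compProd]
    exact ⟨(hf2m.comp measurable_snd).aestronglyMeasurable,
      HasFiniteIntegral.of_bounded (C := C ^ 2) (ae_of_all _ fun p => by
        simpa [Real.norm_eq_abs] using hf2bd p.2)⟩
  -- the "variance" function
  set g : X → ℝ := fun x => ∫ y, (f y - f x) ^ 2 ∂(κ x) with hg_def
  have hgm : StronglyMeasurable g := by
    have : StronglyMeasurable fun p : X × X => (f p.2 - f p.1) ^ 2 :=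
      (((hf.comp measurable_snd).sub (hf.comp measurable_fst)).pow_const 2).stronglyMeasurable
    exact this.integral_kernel_prod_right'
  have hg_nonneg : ∀ x, 0 ≤ g x := fun x => integral_nonneg fun y => sq_nonneg _
  have hg_bd : ∀ x, |g x| ≤ (2 * C) ^ 2 := by
    intro x
    rw [abs_of_nonneg (hg_nonneg x)]
    calc g x ≤ ∫ _, (2 * C) ^ 2 ∂(κ x) := by
          refine integral_mono ?_ (integrable_const _) fun y => ?_
          · exact int_bd (κ x) _ ((hf.sub measurable_const).pow_const 2) ((2 * C) ^ 2)
              (fun y => by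
                rw [abs_of_nonneg (sq_nonneg _), ← sq_abs]
                refine pow_le_pow_left₀ (abs_nonneg _) ?_ 2
                calc |f y - f x| ≤ |f y| + |f x| := abs_sub _ _
                _ ≤ C + C := add_le_add (hbd y) (hbd x)
                _ = 2 * C := by ring)
          · rw [← sq_abs]
            refine pow_le_pow_left₀ (abs_nonneg _) ?_ 2
            calc |f y - f x| ≤ |f y| + |f x| := abs_sub _ _
            _ ≤ C + C := add_le_add (hbd y) (hbd x)
            _ = 2 * C := by ring
      _ = (2 * C) ^ 2 := by simp
  have hg_int : Integrable g μ :=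
    ⟨hgm.aestronglyMeasurable,
      HasFiniteIntegral.of_bounded (C := (2 * C) ^ 2) (ae_of_all _ fun x => by
        simpa [Real.norm_eq_abs] using hg_bd x)⟩
  -- a.e. expansion of g using harmonicity
  have hg_eq : ∀ᵐ x ∂μ, g x = (∫ y, f y ^ 2 ∂(κ x)) - f x ^ 2 := by
    filter_upwards [hharm] with x hx
    have h1 : Integrable (fun y => f y ^ 2) (κ x) := int_bd (κ x) _ hf2m _ hf2bd
    have h2 : Integrable f (κ x) := int_bd (κ x) f hf C hbd
    have h3 : Integrable (fun y => 2 * f x * f y) (κ x) := h2.const_mul _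
    have hexp : ∀ y, (f y - f x) ^ 2 = f y ^ 2 - 2 * f x * f y + f x ^ 2 := by
      intro y; ring
    calc g x = ∫ y, (f y ^ 2 - 2 * f x * f y + f x ^ 2) ∂(κ x) := by
          rw [hg_def]; exact integral_congr_ae (ae_of_all _ fun y => hexp y)
    _ = (∫ y, (f y ^ 2 - 2 * f x * f y) ∂(κ x)) + ∫ _, f x ^ 2 ∂(κ x) :=
          integral_add (h1.sub h3) (integrable_const _)
    _ = ((∫ y, f y ^ 2 ∂(κ x)) - ∫ y, 2 * f x * f y ∂(κ x)) + f x ^ 2 := by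
          rw [integral_sub h1 h3, integral_const]; simp
    _ = (∫ y, f y ^ 2 ∂(κ x)) - f x ^ 2 := by
          rw [integral_const_mul, hx]; ring
  -- integral of g is zero
  have hμf2 : Integrable (fun x => ∫ y, f y ^ 2 ∂(κ x)) μ := by
    refine ⟨?_, HasFiniteIntegral.of_bounded (C := C ^ 2) (ae_of_all _ fun x => ?_)⟩
    · exact ((hf2m.comp measurable_snd).stronglyMeasurable.integral_kernel_prod_right'
        (κ := κ)).aestronglyMeasurable
    · rw [Real.norm_eq_abs, abs_of_nonneg (integral_nonneg fun y => sq_nonneg _)]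
      calc ∫ y, f y ^ 2 ∂(κ x) ≤ ∫ _, C ^ 2 ∂(κ x) :=
            integral_mono (int_bd (κ x) _ hf2m _ hf2bd) (integrable_const _)
              fun y => le_of_abs_le (hf2bd y)
      _ = C ^ 2 := by simp
  have hμint : Integrable (fun x => f x ^ 2) μ := int_bd μ _ hf2m _ hf2bd
  have hint_g : ∫ x, g x ∂μ = 0 := by
    rw [integral_congr_ae hg_eq, integral_sub hμf2 hμint, ← key, sub_self]
  -- hence g = 0 a.e.
  have hg0 : ∀ᵐ x ∂μ, g x = 0 := by
    have := (integral_eq_zero_iff_of_nonneg (fun x => hg_nonneg x) hg_int).mp hint_g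
    filter_upwards [this.le] with x hx1
    exact le_antisymm (by simpa using hx1) (hg_nonneg x)
  -- for a.e. x, f = f x a.e.
  have hconst : ∀ᵐ x ∂μ, ∀ᵐ y ∂μ, f y = f x := by
    filter_upwards [hg0, hequiv] with x hx ⟨_, hμκ⟩
    have hint : Integrable (fun y => (f y - f x) ^ 2) (κ x) :=
      int_bd (κ x) _ ((hf.sub measurable_const).pow_const 2) ((2 * C) ^ 2)
        (fun y => by
          rw [abs_of_nonneg (sq_nonneg _), ← sq_abs]
          refine pow_le_pow_left₀ (abs_nonneg _) ?_ 2
          calc |f y - f x| ≤ |f y| + |f x| := abs_sub _ _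
          _ ≤ C + C := add_le_add (hbd y) (hbd x)
          _ = 2 * C := by ring)
    have h0 : (fun y => (f y - f x) ^ 2) =ᵐ[κ x] 0 :=
      (integral_eq_zero_iff_of_nonneg (fun y => sq_nonneg _) hint).mp hx
    have h0' : ∀ᵐ y ∂(κ x), f y = f x := by
      filter_upwards [h0] with y hy
      have : (f y - f x) ^ 2 = 0 := hy
      have := pow_eq_zero_iff (n := 2) (by norm_num) |>.mp this
      linarith
    exact hμκ.ae_le h0'
  -- extract the constant
  obtain ⟨x₀, hx₀⟩ := hconst.exists
  exact ⟨f x₀, hx₀⟩
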